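/- (Conditional exchangeability under uniform selection.) If the pFS procedure uses ρ(γ) = h(|γ|) and uniform selection λ_j(γ) = 1(γ_j = 0)/(p - |γ|), then conditional on the final model size |γ_(p)| = s, the final model γ_(p) is uniformly distributed over all C(p, s) models of size s; hence P(γ_(p) = γ) = [h(|γ|)∏_{r=0}^{|γ|-1}(1-h(r))] / C(p, |γ|) for |γ| < p. -/

import Mathlib

open Finset

attribute [local instance] Classical.propDecidable

noncomputable section

/-- A model is an inclusion-indicator vector in `{0,1}^p`. -/
abbrev Model (p : ℕ) := Fin p → Bool

/-- Model size `|γ|`: the number of included variables. -/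
def msize {p : ℕ} (γ : Model p) : ℕ := (Finset.univ.filter (fun j => γ j = true)).card

/-- `γ^{+j}` : the model `γ` with variable `j` added. -/
def mplus {p : ℕ} (γ : Model p) (j : Fin p) : Model p := Function.update γ j true

/-- The null model. -/
def mnull (p : ℕ) : Model p := fun _ => false

/-- A sequence of decision variables `(S_t, J_t)`, `t = 1, …, p`. -/
abbrev Dec (p : ℕ) := Fin p → Bool × Fin p

/-- The tentative model `γ_(t)` determined by the decisions `d`. -/
def tent {p : ℕ} (d : Dec p) : ℕ → Model p
  | 0 => mnull p
  | t + 1 =>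
    if h : t < p then
      if (d ⟨t, h⟩).1 = true then tent d t
      else mplus (tent d t) (d ⟨t, h⟩).2
    else tent d t

/-- The procedure has stopped strictly before step `t+1`, i.e. some `S_s = 1` with `s ≤ t`. -/
def stopB {p : ℕ} (d : Dec p) (t : ℕ) : Prop :=
  ∃ s : Fin p, (s : ℕ) < t ∧ (d s).1 = true

/-- Probability of the `t`-th pair of decisions of a pFS procedure with stopping map `ρ`
and selection map `lam` (once stopped, the stopping indicator stays 1 with probability 1;
the selection variable is always drawn from the multinomial with weights `lam`). -/
def stepProb {p : ℕ} (ρ : Model p → ℝ) (lam : Model p → Fin p → ℝ)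
    (d : Dec p) (t : Fin p) : ℝ :=
  (if stopB d (t : ℕ) then (if (d t).1 = true then 1 else 0)
   else if (d t).1 = true then ρ (tent d (t : ℕ)) else 1 - ρ (tent d (t : ℕ)))
  * lam (tent d (t : ℕ)) (d t).2

/-- Probability of a whole decision sequence under the pFS procedure `(ρ, lam)`. -/
def pathProb {p : ℕ} (ρ : Model p → ℝ) (lam : Model p → Fin p → ℝ) (d : Dec p) : ℝ :=
  ∏ t : Fin p, stepProb ρ lam d t

/-- Marginal probability that the final model `γ_(p)` equals `γ`. -/
def finalProb {p : ℕ} (ρ : Model p → ℝ) (lam : Model p → Fin p → ℝ) (γ : Model p) : ℝ :=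
  ∑ d : Dec p, if tent d p = γ then pathProb ρ lam d else 0

/-- Marginal probability that the final model has size `s`. -/
def sizeProb {p : ℕ} (ρ : Model p → ℝ) (lam : Model p → Fin p → ℝ) (s : ℕ) : ℝ :=
  ∑ d : Dec p, if msize (tent d p) = s then pathProb ρ lam d else 0

/-- Validity of a stopping-probability map: values in `[0,1]` on non-full models. -/
def ValidStop {p : ℕ} (ρ : Model p → ℝ) : Prop :=
  ∀ γ : Model p, msize γ < p → 0 ≤ ρ γ ∧ ρ γ ≤ 1

/-- Validity of a selection-probability map: nonnegative, summing to one, and vanishing on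
already-included variables, on non-full models. -/
def ValidSel {p : ℕ} (lam : Model p → Fin p → ℝ) : Prop :=
  ∀ γ : Model p, msize γ < p →
    (∀ j, 0 ≤ lam γ j) ∧ (∑ j, lam γ j) = 1 ∧ (∀ j, γ j = true → lam γ j = 0)

/-- `(ρ, lam)` specify a valid pFS procedure. -/
def IsPFS {p : ℕ} (ρ : Model p → ℝ) (lam : Model p → Fin p → ℝ) : Prop :=
  ValidStop ρ ∧ ValidSel lam

/-- The Markov transition kernel of the pFS chain at step `t` (from `γ_(t-1)` to `γ_(t)`). -/
def kernel {p : ℕ} (ρ : Model p → ℝ) (lam : Model p → Fin p → ℝ)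
    (t : ℕ) (γ γ' : Model p) : ℝ :=
  if msize γ < t - 1 then (if γ' = γ then 1 else 0)
  else if msize γ = t - 1 then
    (if γ' = γ then ρ γ
     else ∑ j ∈ Finset.univ.filter (fun j => γ j = false ∧ γ' = mplus γ j), (1 - ρ γ) * lam γ j)
  else 0

/-- Size-dependent stopping map `ρ(γ) = h(|γ|)`. -/
def rhoH {p : ℕ} (h : ℕ → ℝ) : Model p → ℝ := fun γ => h (msize γ)

/-- Uniform selection among excluded variables: `λ_j(γ) = 1(γ_j = 0)/(p - |γ|)`. -/
def lamUnif {p : ℕ} : Model p → Fin p → ℝ :=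
  fun γ j => if γ j = true then 0 else ((p : ℝ) - (msize γ : ℝ))⁻¹

section Aux

variable {p : ℕ}

lemma msize_le (γ : Model p) : msize γ ≤ p := by
  classical
  simpa [msize] using (Finset.card_filter_le Finset.univ (fun j => γ j = true))

lemma msize_mnull : msize (mnull p) = 0 := by simp [msize, mnull]

lemma filter_mplus {γ : Model p} {j : Fin p} :
    (Finset.univ.filter (fun i => mplus γ j i = true))
      = insert j (Finset.univ.filter (fun i => γ i = true)) := by
  ext i
  by_cases hij : i = j <;> simp [mplus, Function.update, hij]

lemma msize_mplus {γ : Model p} {j : Fin p} (hj : γ j = false) :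
    msize (mplus γ j) = msize γ + 1 := by
  rw [msize, filter_mplus, Finset.card_insert_of_notMem (by simp [hj]), msize]

lemma msize_lt_of_false {γ : Model p} {j : Fin p} (hj : γ j = false) :
    msize γ < p := by
  have h1 := msize_le (mplus γ j)
  rw [msize_mplus hj] at h1
  omega

lemma full_of_msize {γ : Model p} (hfull : msize γ = p) (j : Fin p) : γ j = true := by
  by_contra hc
  have := msize_lt_of_false (γ := γ) (j := j) (by simpa using hc)
  omega

lemma card_not_mem (γ : Model p) :
    (Finset.univ.filter (fun j => ¬ γ j = true)).card = p - msize γ := by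
  rw [Finset.filter_not, Finset.card_sdiff_of_subset (Finset.filter_subset _ _)]
  simp [msize]

lemma sum_lamUnif_mul {γ : Model p} (hlt : msize γ < p) (f : Fin p → ℝ) :
    ∑ j, lamUnif γ j * f j
      = ((p : ℝ) - (msize γ : ℝ))⁻¹ * ∑ j ∈ Finset.univ.filter (fun j => ¬ γ j = true), f j := by
  rw [Finset.mul_sum]
  rw [show (Finset.univ : Finset (Fin p)) = Finset.univ from rfl]
  rw [← Finset.sum_filter_add_sum_filter_not Finset.univ (fun j => γ j = true)
    (fun j => lamUnif γ j * f j)]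
  have h1 : ∑ j ∈ Finset.univ.filter (fun j => γ j = true), lamUnif γ j * f j = 0 := by
    apply Finset.sum_eq_zero
    intro j hj
    simp only [Finset.mem_filter] at hj
    simp [lamUnif, hj.2]
  rw [h1, zero_add]
  apply Finset.sum_congr rfl
  intro j hj
  simp only [Finset.mem_filter] at hj
  simp [lamUnif, hj.2]

lemma sub_ne_zero_cast {a b : ℕ} (hlt : b < a) : ((a : ℝ) - (b : ℝ)) ≠ 0 := by
  have : (b : ℝ) < (a : ℝ) := by exact_mod_cast hlt
  linarith

lemma sum_lamUnif {γ : Model p} (hlt : msize γ < p) : ∑ j, lamUnif γ j = 1 := by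
  have := sum_lamUnif_mul hlt (fun _ => (1 : ℝ))
  simp only [mul_one] at this
  rw [this, Finset.sum_const, card_not_mem]
  rw [nsmul_eq_mul]
  have hcast : ((p - msize γ : ℕ) : ℝ) = (p : ℝ) - (msize γ : ℝ) := by
    have := msize_le γ; push_cast [Nat.cast_sub (le_of_lt hlt)]; ring
  rw [hcast]
  field_simp [sub_ne_zero_cast hlt]

lemma lamUnif_full {γ : Model p} (hfull : msize γ = p) (j : Fin p) : lamUnif γ j = 0 := by
  simp [lamUnif, full_of_msize hfull j]

/-- Pointwise order on models. -/
def ModLE {p : ℕ} (γ γ' : Model p) : Prop := ∀ j, γ j = true → γ' j = true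

lemma modLE_mplus (γ : Model p) (j : Fin p) : ModLE γ (mplus γ j) := by
  intro i hi
  by_cases hij : i = j <;> simp [mplus, Function.update, hij, hi]

lemma modLE_trans {γ₁ γ₂ γ₃ : Model p} (h1 : ModLE γ₁ γ₂) (h2 : ModLE γ₂ γ₃) : ModLE γ₁ γ₃ :=
  fun j hj => h2 j (h1 j hj)

lemma eq_of_modLE_of_msize {γ γ' : Model p} (hle : ModLE γ γ') (hsz : msize γ = msize γ') :
    γ = γ' := by
  have hsub : (Finset.univ.filter (fun j => γ j = true))
      ⊆ (Finset.univ.filter (fun j => γ' j = true)) := by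
    intro j hj
    simp only [Finset.mem_filter, Finset.mem_univ, true_and] at hj ⊢
    exact hle j hj
  have := Finset.eq_of_subset_of_card_le hsub (le_of_eq hsz.symm)
  funext j
  have hiff : γ j = true ↔ γ' j = true := by
    constructor
    · exact hle j
    · intro hj
      have : j ∈ (Finset.univ.filter (fun j => γ j = true)) := by
        rw [this]; simp [hj]
      simpa using this
  cases hγ : γ j <;> cases hγ' : γ' j <;> simp_all

lemma card_diff_of_modLE {γ γ' : Model p} (hle : ModLE γ γ') :
    (Finset.univ.filter (fun j => γ j = false ∧ γ' j = true)).card = msize γ' - msize γ := by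
  have hfe : (Finset.univ.filter (fun j => γ j = false ∧ γ' j = true))
      = (Finset.univ.filter (fun j => γ' j = true)) \ (Finset.univ.filter (fun j => γ j = true)) := by
    ext j
    simp only [Finset.mem_filter, Finset.mem_sdiff, Finset.mem_univ, true_and]
    constructor
    · rintro ⟨h1, h2⟩; exact ⟨h2, by simp [h1]⟩
    · rintro ⟨h1, h2⟩; exact ⟨by simpa using h2, h1⟩
  rw [hfe, Finset.card_sdiff_of_subset]
  · rfl
  · intro j hj
    simp only [Finset.mem_filter, Finset.mem_univ, true_and] at hj ⊢
    exact hle j hj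

end Aux
section Markov

variable {X S : Type*}

/-- Run a deterministic state machine along the decisions `d`. -/
def runM {n : ℕ} (step : S → X → S) (init : S) (d : Fin n → X) : ℕ → S
  | 0 => init
  | t + 1 =>
    if h : t < n then step (runM step init d t) (d ⟨t, h⟩) else runM step init d t

/-- Backward recursion for the expected value of `g` after `n` steps. -/
def Mrec [Fintype X] (w : S → X → ℝ) (step : S → X → S) (g : S → ℝ) : ℕ → S → ℝ
  | 0, s => g s
  | n + 1, s => ∑ x : X, w s x * Mrec w step g n (step s x)

lemma runM_cons {n : ℕ} (step : S → X → S) (init : S) (x : X) (d : Fin n → X) :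
    ∀ t, runM step init (Fin.cons x d) (t + 1) = runM step (step init x) d t := by
  intro t
  induction t with
  | zero =>
    show (if h : 0 < n + 1 then _ else _) = _
    rw [dif_pos (Nat.succ_pos n)]
    rfl
  | succ t ih =>
    show (if h : t + 1 < n + 1 then _ else _) = _
    by_cases h : t < n
    · rw [dif_pos (Nat.succ_lt_succ h)]
      show step (runM step init (Fin.cons x d) (t+1)) (d ⟨t, h⟩) = _
      rw [ih]
      conv_rhs => rw [runM]
      rw [dif_pos h]
    · rw [dif_neg (by omega), ih]
      conv_rhs => rw [runM]
      rw [dif_neg h]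

lemma markov_sum [Fintype X] (w : S → X → ℝ) (step : S → X → S) (g : S → ℝ) :
    ∀ (n : ℕ) (init : S),
      ∑ d : Fin n → X,
        (∏ t : Fin n, w (runM step init d (t : ℕ)) (d t)) * g (runM step init d n)
        = Mrec w step g n init := by
  intro n
  induction n with
  | zero =>
    intro init
    simp [Mrec, runM]
  | succ n ih =>
    intro init
    rw [show Mrec w step g (n+1) init = ∑ x : X, w init x * Mrec w step g n (step init x) from rfl]
    rw [← Equiv.sum_comp (Fin.consEquiv (fun _ : Fin (n+1) => X))
      (fun d => (∏ t : Fin (n+1), w (runM step init d (t : ℕ)) (d t)) * g (runM step init d (n+1)))]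
    rw [Fintype.sum_prod_type]
    apply Finset.sum_congr rfl
    intro x _
    rw [← ih (step init x), Finset.mul_sum]
    apply Finset.sum_congr rfl
    intro d _
    have hcons : (Fin.consEquiv (fun _ : Fin (n+1) => X)) (x, d) = (Fin.cons x d : Fin (n+1) → X) := rfl
    rw [hcons]
    rw [Fin.prod_univ_succ]
    have h0 : w (runM step init ((Fin.cons x d : Fin (n+1) → X)) ((0 : Fin (n+1)) : ℕ)) ((Fin.cons x d : Fin (n+1) → X) 0) = w init x := by
      rw [Fin.cons_zero]
      rfl
    rw [h0]
    have hsucc : ∀ t : Fin n,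
        w (runM step init ((Fin.cons x d : Fin (n+1) → X)) ((Fin.succ t : Fin (n+1)) : ℕ)) ((Fin.cons x d : Fin (n+1) → X) (Fin.succ t))
          = w (runM step (step init x) d (t : ℕ)) (d t) := by
      intro t
      rw [Fin.cons_succ]
      congr 1
      exact runM_cons step init x d (t : ℕ)
    rw [Finset.prod_congr rfl (fun t _ => hsucc t)]
    rw [runM_cons step init x d n]
    ring

end Markov
section Inst

variable {p : ℕ}

/-- State transition of the pFS chain: state = (current model, stopped flag). -/
def pstep {p : ℕ} : (Model p × Bool) → (Bool × Fin p) → (Model p × Bool) :=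
  fun s x => (if x.1 = true then s.1 else mplus s.1 x.2, s.2 || x.1)

/-- Step weight as a function of the state. -/
def pw {p : ℕ} (h : ℕ → ℝ) : (Model p × Bool) → (Bool × Fin p) → ℝ :=
  fun s x =>
    (if s.2 = true then (if x.1 = true then 1 else 0)
     else if x.1 = true then h (msize s.1) else 1 - h (msize s.1))
    * lamUnif s.1 x.2

lemma stopB_succ (d : Dec p) (t : ℕ) (ht : t < p) :
    stopB d (t + 1) ↔ stopB d t ∨ (d ⟨t, ht⟩).1 = true := by
  constructor
  · rintro ⟨s, hs, h1⟩
    rcases Nat.lt_succ_iff_lt_or_eq.mp hs with h | h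
    · exact Or.inl ⟨s, h, h1⟩
    · right
      have : s = ⟨t, ht⟩ := Fin.ext h
      rwa [← this]
  · rintro (⟨s, hs, h1⟩ | h1)
    · exact ⟨s, Nat.lt_succ_of_lt hs, h1⟩
    · exact ⟨⟨t, ht⟩, Nat.lt_succ_self t, h1⟩

lemma stopB_succ_ge (d : Dec p) (t : ℕ) (ht : ¬ t < p) :
    stopB d (t + 1) ↔ stopB d t := by
  constructor
  · rintro ⟨s, hs, h1⟩
    exact ⟨s, by have := s.2; omega, h1⟩
  · rintro ⟨s, hs, h1⟩
    exact ⟨s, Nat.lt_succ_of_lt hs, h1⟩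

lemma run_spec (d : Dec p) :
    ∀ t, (runM pstep (mnull p, false) d t).1 = tent d t
      ∧ ((runM pstep (mnull p, false) d t).2 = true ↔ stopB d t) := by
  intro t
  induction t with
  | zero =>
    refine ⟨rfl, ?_⟩
    simp [runM, stopB]
  | succ t ih =>
    by_cases ht : t < p
    · have hrw : runM pstep (mnull p, false) d (t + 1)
        = pstep (runM pstep (mnull p, false) d t) (d ⟨t, ht⟩) := by
        rw [runM, dif_pos ht]
      constructor
      · rw [hrw]
        show (if (d ⟨t, ht⟩).1 = true then _ else _) = _
        rw [tent, dif_pos ht, ih.1]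
      · rw [hrw]
        show ((runM pstep (mnull p, false) d t).2 || (d ⟨t, ht⟩).1) = true ↔ _
        rw [Bool.or_eq_true, ih.2, stopB_succ d t ht]
    · have hrw : runM pstep (mnull p, false) d (t + 1)
        = runM pstep (mnull p, false) d t := by
        rw [runM, dif_neg ht]
      rw [hrw, tent, dif_neg ht, stopB_succ_ge d t ht]
      exact ih

lemma stepProb_eq (h : ℕ → ℝ) (d : Dec p) (t : Fin p) :
    stepProb (rhoH h) lamUnif d t
      = pw h (runM pstep (mnull p, false) d (t : ℕ)) (d t) := by
  rw [stepProb, pw, rhoH, (run_spec d (t : ℕ)).1]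
  congr 1
  exact if_congr (Iff.symm ((run_spec d (t : ℕ)).2)) rfl rfl

/-- The terminal indicator function. -/
def gm {p : ℕ} (γ₀ : Model p) : Model p × Bool → ℝ := fun s => if s.1 = γ₀ then 1 else 0

lemma finalProb_eq (h : ℕ → ℝ) (γ₀ : Model p) :
    finalProb (rhoH h) lamUnif γ₀
      = Mrec (pw h) pstep (gm γ₀) p (mnull p, false) := by
  rw [finalProb, ← markov_sum (pw h) pstep (gm γ₀) p (mnull p, false)]
  apply Finset.sum_congr rfl
  intro d _
  simp only [gm]
  rw [(run_spec d p).1]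
  rw [pathProb, Finset.prod_congr rfl (fun t _ => stepProb_eq h d t)]
  by_cases hfin : tent d p = γ₀ <;> simp [hfin, gm]

end Inst
section MrecLemmas

variable {p : ℕ}

lemma Mrec_succ (h : ℕ → ℝ) (γ₀ : Model p) (n : ℕ) (s : Model p × Bool) :
    Mrec (pw h) pstep (gm γ₀) (n + 1) s
      = ∑ b : Bool, ∑ j : Fin p,
          pw h s (b, j) * Mrec (pw h) pstep (gm γ₀) n (pstep s (b, j)) := by
  rw [show Mrec (pw h) pstep (gm γ₀) (n + 1) s
    = ∑ x : Bool × Fin p, pw h s x * Mrec (pw h) pstep (gm γ₀) n (pstep s x) from rfl]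
  rw [Fintype.sum_prod_type]

lemma Mrec_stopped (h : ℕ → ℝ) (γ₀ γ : Model p) (hlt : msize γ < p) :
    ∀ n, Mrec (pw h) pstep (gm γ₀) n (γ, true) = (if γ = γ₀ then (1 : ℝ) else 0) := by
  intro n
  induction n with
  | zero => rfl
  | succ n ih =>
    rw [Mrec_succ, Fintype.sum_bool]
    have hfalse : ∀ j : Fin p,
        pw h (γ, true) (false, j) * Mrec (pw h) pstep (gm γ₀) n (pstep (γ, true) (false, j)) = 0 := by
      intro j
      simp [pw]
    have htrue : ∀ j : Fin p,
        pw h (γ, true) (true, j) * Mrec (pw h) pstep (gm γ₀) n (pstep (γ, true) (true, j))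
          = lamUnif γ j * (if γ = γ₀ then (1 : ℝ) else 0) := by
      intro j
      have hps : pstep (γ, true) (true, j) = (γ, true) := by simp [pstep]
      rw [hps, ih, pw]
      simp
    rw [Finset.sum_congr rfl (fun j _ => htrue j), Finset.sum_congr rfl (fun j _ => hfalse j)]
    rw [Finset.sum_const, smul_zero, add_zero, ← Finset.sum_mul, sum_lamUnif hlt, one_mul]

lemma Mrec_notle (h : ℕ → ℝ) (γ₀ : Model p) :
    ∀ (n : ℕ) (γ : Model p) (b : Bool), ¬ ModLE γ γ₀ →
      Mrec (pw h) pstep (gm γ₀) n (γ, b) = 0 := by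
  intro n
  induction n with
  | zero =>
    intro γ b hno
    have hne : γ ≠ γ₀ := by rintro rfl; exact hno (fun j hj => hj)
    show (if γ = γ₀ then (1 : ℝ) else 0) = 0
    rw [if_neg hne]
  | succ n ih =>
    intro γ b hno
    rw [Mrec_succ]
    have hz : ∀ (c : Bool) (j : Fin p),
        Mrec (pw h) pstep (gm γ₀) n (pstep (γ, b) (c, j)) = 0 := by
      intro c j
      cases c
      · have hps : pstep (γ, b) (false, j) = (mplus γ j, b) := by simp [pstep]
        rw [hps]
        exact ih (mplus γ j) b (fun hle => hno (modLE_trans (modLE_mplus γ j) hle))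
      · have hps : pstep (γ, b) (true, j) = (γ, true) := by simp [pstep]
        rw [hps]
        exact ih γ true hno
    apply Finset.sum_eq_zero
    intro c _
    apply Finset.sum_eq_zero
    intro j _
    rw [hz c j, mul_zero]

lemma Mrec_main (h : ℕ → ℝ) (γ₀ : Model p) (hs : msize γ₀ < p) :
    ∀ (k : ℕ) (γ : Model p), ModLE γ γ₀ → msize γ + k = msize γ₀ →
      Mrec (pw h) pstep (gm γ₀) (p - msize γ) (γ, false)
        = h (msize γ₀) * ∏ r ∈ Finset.Ico (msize γ) (msize γ₀),
            ((1 - h r) * (((msize γ₀ : ℝ) - (r : ℝ)) / ((p : ℝ) - (r : ℝ)))) := by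
  intro k
  induction k with
  | zero =>
    intro γ hle hsz
    have hγ : γ = γ₀ := eq_of_modLE_of_msize hle (by omega)
    subst hγ
    obtain ⟨m, hm⟩ : ∃ m, p - msize γ = m + 1 := ⟨p - msize γ - 1, by omega⟩
    rw [hm, Mrec_succ, Fintype.sum_bool]
    have htrue : ∀ j : Fin p,
        pw h (γ, false) (true, j) * Mrec (pw h) pstep (gm γ) m (pstep (γ, false) (true, j))
          = lamUnif γ j * h (msize γ) := by
      intro j
      have hps : pstep (γ, false) (true, j) = (γ, true) := by simp [pstep]
      rw [hps, Mrec_stopped h γ γ (by omega) m, if_pos rfl, pw]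
      simp
      ring
    have hfalse : ∀ j : Fin p,
        pw h (γ, false) (false, j) * Mrec (pw h) pstep (gm γ) m (pstep (γ, false) (false, j)) = 0 := by
      intro j
      by_cases hj : γ j = true
      · have : lamUnif γ j = 0 := by simp [lamUnif, hj]
        rw [pw, this]
        simp
      · have hps : pstep (γ, false) (false, j) = (mplus γ j, false) := by simp [pstep]
        rw [hps, Mrec_notle h γ m (mplus γ j) false, mul_zero]
        intro hle'
        have := hle' j (by simp [mplus, Function.update])
        exact hj this
    rw [Finset.sum_congr rfl (fun j _ => htrue j), Finset.sum_congr rfl (fun j _ => hfalse j)]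
    rw [Finset.sum_const, smul_zero, add_zero, ← Finset.sum_mul, sum_lamUnif (by omega), one_mul]
    rw [Finset.Ico_self, Finset.prod_empty, mul_one]
  | succ k ih =>
    intro γ hle hsz
    have htlt : msize γ < msize γ₀ := by omega
    have htp : msize γ < p := by omega
    obtain ⟨m, hm⟩ : ∃ m, p - msize γ = m + 1 := ⟨p - msize γ - 1, by omega⟩
    have hm' : m = p - (msize γ + 1) := by omega
    rw [hm, Mrec_succ, Fintype.sum_bool]
    have hγne : γ ≠ γ₀ := by
      intro hc
      rw [hc] at hsz
      omega
    have htrue : ∀ j : Fin p,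
        pw h (γ, false) (true, j) * Mrec (pw h) pstep (gm γ₀) m (pstep (γ, false) (true, j)) = 0 := by
      intro j
      have hps : pstep (γ, false) (true, j) = (γ, true) := by simp [pstep]
      rw [hps, Mrec_stopped h γ₀ γ htp m, if_neg hγne, mul_zero]
    set W : ℝ := h (msize γ₀) * ∏ r ∈ Finset.Ico (msize γ + 1) (msize γ₀),
        ((1 - h r) * (((msize γ₀ : ℝ) - (r : ℝ)) / ((p : ℝ) - (r : ℝ)))) with hW
    have hfalse : ∀ j : Fin p,
        pw h (γ, false) (false, j) * Mrec (pw h) pstep (gm γ₀) m (pstep (γ, false) (false, j))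
          = if γ j = false ∧ γ₀ j = true
            then (1 - h (msize γ)) * ((p : ℝ) - (msize γ : ℝ))⁻¹ * W else 0 := by
      intro j
      by_cases hj : γ j = true
      · rw [if_neg (by simp [hj])]
        have : lamUnif γ j = 0 := by simp [lamUnif, hj]
        rw [pw, this]
        simp
      · have hjf : γ j = false := by simpa using hj
        have hps : pstep (γ, false) (false, j) = (mplus γ j, false) := by simp [pstep]
        by_cases hj0 : γ₀ j = true
        · rw [if_pos ⟨hjf, hj0⟩, hps]
          have hle' : ModLE (mplus γ j) γ₀ := by
            intro i hi
            by_cases hij : i = j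
            · rwa [hij]
            · exact hle i (by simpa [mplus, Function.update, hij] using hi)
          have hih := ih (mplus γ j) hle' (by rw [msize_mplus hjf]; omega)
          rw [msize_mplus hjf, ← hm'] at hih
          rw [hih, pw]
          simp only [lamUnif, hjf]
          simp [← hW]
        · rw [if_neg (by simp [hj0]), hps, Mrec_notle h γ₀ m (mplus γ j) false, mul_zero]
          intro hle'
          exact hj0 (hle' j (by simp [mplus, Function.update]))
    rw [Finset.sum_congr rfl (fun j _ => htrue j), Finset.sum_congr rfl (fun j _ => hfalse j)]
    rw [Finset.sum_const, smul_zero, zero_add, ← Finset.sum_filter, Finset.sum_const,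
      card_diff_of_modLE hle, nsmul_eq_mul]
    have hcast : ((msize γ₀ - msize γ : ℕ) : ℝ) = (msize γ₀ : ℝ) - (msize γ : ℝ) := by
      push_cast [Nat.cast_sub (le_of_lt htlt)]; ring
    rw [hcast, Finset.prod_eq_prod_Ico_succ_bot htlt, hW]
    have hpne : ((p : ℝ) - (msize γ : ℝ)) ≠ 0 := sub_ne_zero_cast htp
    field_simp
end MrecLemmas
section Perm

variable {p : ℕ}

/-- The action of a permutation on decision sequences. -/
def decPerm (σ : Equiv.Perm (Fin p)) : Dec p ≃ Dec p where
  toFun d := fun t => ((d t).1, σ.symm (d t).2)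
  invFun d := fun t => ((d t).1, σ (d t).2)
  left_inv d := by funext t; simp
  right_inv d := by funext t; simp

lemma msize_comp (σ : Equiv.Perm (Fin p)) (γ : Model p) : msize (γ ∘ σ) = msize γ := by
  rw [msize, msize]
  apply Finset.card_bij (fun j _ => σ j)
  · intro j hj
    simp only [Finset.mem_filter, Finset.mem_univ, true_and, Function.comp_apply] at hj ⊢
    exact hj
  · intro a _ b _ hab
    exact σ.injective hab
  · intro i hi
    refine ⟨σ.symm i, ?_, by simp⟩
    simp only [Finset.mem_filter, Finset.mem_univ, true_and, Function.comp_apply] at hi ⊢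
    simpa using hi

lemma mplus_comp (γ : Model p) (σ : Equiv.Perm (Fin p)) (j : Fin p) :
    mplus (γ ∘ σ) (σ.symm j) = (mplus γ j) ∘ σ := by
  funext i
  by_cases hij : σ i = j
  · have hi : i = σ.symm j := by rw [← hij]; simp
    simp [mplus, Function.update, hi, hij]
  · have hi : ¬ i = σ.symm j := fun hc => hij (by rw [hc]; simp)
    simp [mplus, Function.update, hi, hij]

lemma tent_perm (σ : Equiv.Perm (Fin p)) (d : Dec p) :
    ∀ t, tent (decPerm σ d) t = tent d t ∘ σ := by
  intro t
  induction t with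
  | zero => rfl
  | succ t ih =>
    by_cases ht : t < p
    · rw [tent, tent, dif_pos ht, dif_pos ht]
      show (if (d ⟨t, ht⟩).1 = true then tent (decPerm σ d) t
        else mplus (tent (decPerm σ d) t) (σ.symm (d ⟨t, ht⟩).2)) = _
      by_cases hd : (d ⟨t, ht⟩).1 = true
      · rw [if_pos hd, if_pos hd, ih]
      · rw [if_neg hd, if_neg hd, ih, mplus_comp]
    · rw [tent, tent, dif_neg ht, dif_neg ht, ih]

lemma stopB_decPerm (σ : Equiv.Perm (Fin p)) (d : Dec p) (t : ℕ) :
    stopB (decPerm σ d) t ↔ stopB d t := by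
  simp [stopB, decPerm]

lemma stepProb_decPerm (h : ℕ → ℝ) (σ : Equiv.Perm (Fin p)) (d : Dec p) (t : Fin p) :
    stepProb (rhoH h) lamUnif (decPerm σ d) t = stepProb (rhoH h) lamUnif d t := by
  rw [stepProb, stepProb]
  have h1 : tent (decPerm σ d) (t : ℕ) = tent d (t : ℕ) ∘ σ := tent_perm σ d (t : ℕ)
  have h2 : (decPerm σ d t).1 = (d t).1 := rfl
  have h3 : (decPerm σ d t).2 = σ.symm (d t).2 := rfl
  have hlam : lamUnif (tent d (t : ℕ) ∘ σ) (σ.symm (d t).2) = lamUnif (tent d (t : ℕ)) (d t).2 := by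
    rw [lamUnif]
    simp only [Function.comp_apply, Equiv.apply_symm_apply, msize_comp]
    rfl
  rw [h1, h2, h3, hlam, rhoH]
  simp only [msize_comp]
  congr 1

lemma finalProb_perm (h : ℕ → ℝ) (σ : Equiv.Perm (Fin p)) (γ : Model p) :
    finalProb (rhoH h) lamUnif (γ ∘ σ) = finalProb (rhoH h) lamUnif γ := by
  rw [finalProb, finalProb,
    ← Equiv.sum_comp (decPerm σ)
      (fun d => if tent d p = γ ∘ σ then pathProb (rhoH h) lamUnif d else 0)]
  apply Finset.sum_congr rfl
  intro d _
  have h1 : tent (decPerm σ d) p = tent d p ∘ σ := tent_perm σ d p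
  have h2 : pathProb (rhoH h) lamUnif (decPerm σ d) = pathProb (rhoH h) lamUnif d := by
    rw [pathProb, pathProb]
    exact Finset.prod_congr rfl (fun t _ => stepProb_decPerm h σ d t)
  simp only [h1, h2]
  have hiff : tent d p ∘ σ = γ ∘ σ ↔ tent d p = γ := by
    constructor
    · intro H
      funext i
      have := congrFun H (σ.symm i)
      simpa using this
    · intro H; rw [H]
  exact if_congr hiff rfl rfl

lemma exists_perm {γ₁ γ₂ : Model p} (hsz : msize γ₁ = msize γ₂) :
    ∃ σ : Equiv.Perm (Fin p), γ₁ ∘ σ = γ₂ := by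
  have hc1 : Fintype.card {j // γ₂ j = true} = Fintype.card {j // γ₁ j = true} := by
    rw [Fintype.card_subtype, Fintype.card_subtype]
    exact hsz.symm
  have hc2 : Fintype.card {j // ¬ γ₂ j = true} = Fintype.card {j // ¬ γ₁ j = true} := by
    rw [Fintype.card_subtype_compl, Fintype.card_subtype_compl, hc1]
  have e1 := Fintype.equivOfCardEq hc1
  have e2 := Fintype.equivOfCardEq hc2
  refine ⟨Equiv.subtypeCongr e1 e2, ?_⟩
  funext j
  by_cases hj : γ₂ j = true
  · have happ : Equiv.subtypeCongr e1 e2 j = ↑(e1 ⟨j, hj⟩) := by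
      simp [Equiv.subtypeCongr, hj]
    rw [Function.comp_apply, happ]
    rw [(e1 ⟨j, hj⟩).2, hj]
  · have happ : Equiv.subtypeCongr e1 e2 j = ↑(e2 ⟨j, hj⟩) := by
      simp [Equiv.subtypeCongr, hj]
    rw [Function.comp_apply, happ]
    have h2 := (e2 ⟨j, hj⟩).2
    have hb : γ₁ ↑(e2 ⟨j, hj⟩) = false := by simpa using h2
    have hjf : γ₂ j = false := by simpa using hj
    rw [hb, hjf]

lemma modelCard (s : ℕ) :
    (Finset.univ.filter (fun γ' : Model p => msize γ' = s)).card = p.choose s := by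
  have hpow : ((Finset.univ : Finset (Fin p)).powersetCard s).card = p.choose s := by
    rw [Finset.card_powersetCard, Finset.card_univ, Fintype.card_fin]
  rw [← hpow]
  apply Finset.card_bij' (fun γ' _ => Finset.univ.filter (fun j => γ' j = true))
    (fun S _ => (fun j => decide (j ∈ S) : Model p))
  · intro γ' hγ'
    simp only [Finset.mem_filter, Finset.mem_univ, true_and] at hγ'
    rw [Finset.mem_powersetCard]
    exact ⟨Finset.subset_univ _, hγ'⟩
  · intro S hS
    rw [Finset.mem_powersetCard] at hS
    simp only [Finset.mem_filter, Finset.mem_univ, true_and]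
    rw [msize]
    rw [show (Finset.univ.filter fun j => (fun i => decide (i ∈ S)) j = true) = S by
      ext i; simp]
    exact hS.2
  · intro γ' _
    funext j
    simp [Finset.mem_filter]
  · intro S _
    ext i
    simp

lemma sizeProb_eq (h : ℕ → ℝ) (γ : Model p) :
    sizeProb (p := p) (rhoH h) lamUnif (msize γ)
      = ∑ γ' ∈ Finset.univ.filter (fun γ' : Model p => msize γ' = msize γ),
          finalProb (rhoH h) lamUnif γ' := by
  rw [sizeProb]
  have key : ∀ d : Dec p,
      (if msize (tent d p) = msize γ then pathProb (rhoH h) lamUnif d else 0)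
        = ∑ γ' ∈ Finset.univ.filter (fun γ' : Model p => msize γ' = msize γ),
            (if tent d p = γ' then pathProb (rhoH h) lamUnif d else 0) := by
    intro d
    rw [Finset.sum_ite_eq (Finset.univ.filter (fun γ' : Model p => msize γ' = msize γ))
      (tent d p) (fun _ => pathProb (rhoH h) lamUnif d)]
    simp [Finset.mem_filter]
  rw [Finset.sum_congr rfl (fun d _ => key d), Finset.sum_comm]
  apply Finset.sum_congr rfl
  intro γ' _
  rw [finalProb]

lemma prod_identity (h : ℕ → ℝ) {s : ℕ} (hs : s < p) :
    ∏ r ∈ Finset.Ico 0 s, ((1 - h r) * (((s : ℝ) - (r : ℝ)) / ((p : ℝ) - (r : ℝ))))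
      = (∏ r ∈ Finset.range s, (1 - h r)) / (p.choose s : ℝ) := by
  rw [← Finset.range_eq_Ico, Finset.prod_mul_distrib]
  have hnum : ∏ r ∈ Finset.range s, ((s : ℝ) - (r : ℝ)) = (s.factorial : ℝ) := by
    rw [Finset.prod_congr rfl (fun r hr => by
      rw [← Nat.cast_sub (le_of_lt (Finset.mem_range.mp hr))] :
      ∀ r ∈ Finset.range s, ((s : ℝ) - (r : ℝ)) = ((s - r : ℕ) : ℝ))]
    rw [← Nat.cast_prod, ← Nat.descFactorial_eq_prod_range, Nat.descFactorial_self]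
  have hden : ∏ r ∈ Finset.range s, ((p : ℝ) - (r : ℝ)) = (p.descFactorial s : ℝ) := by
    rw [Finset.prod_congr rfl (fun r hr => by
      rw [← Nat.cast_sub (le_of_lt (lt_trans (Finset.mem_range.mp hr) hs))] :
      ∀ r ∈ Finset.range s, ((p : ℝ) - (r : ℝ)) = ((p - r : ℕ) : ℝ))]
    rw [← Nat.cast_prod, ← Nat.descFactorial_eq_prod_range]
  have hdiv : ∏ r ∈ Finset.range s, (((s : ℝ) - (r : ℝ)) / ((p : ℝ) - (r : ℝ)))
      = ((p.choose s : ℝ))⁻¹ := by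
    rw [Finset.prod_div_distrib, hnum, hden, Nat.descFactorial_eq_factorial_mul_choose]
    have hfac : (s.factorial : ℝ) ≠ 0 := by exact_mod_cast s.factorial_ne_zero
    have hch : ((p.choose s : ℕ) : ℝ) ≠ 0 := by
      exact_mod_cast (Nat.choose_pos (le_of_lt hs)).ne'
    push_cast
    field_simp
  rw [hdiv, div_eq_mul_inv]

end Perm
/-- **Conditional exchangeability under uniform selection.** With size-dependent stopping and
uniform selection, the final model is uniform among models of the same size (conditionally on
its size), and `P(γ_(p) = γ) = h(|γ|)·∏_{r<|γ|}(1-h(r)) / C(p,|γ|)` for `|γ| < p`. -/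
theorem uniform_selection_exchangeable {p : ℕ} (h : ℕ → ℝ)
    (hh : ∀ s < p, 0 ≤ h s ∧ h s ≤ 1) :
    (∀ γ₁ γ₂ : Model p, msize γ₁ = msize γ₂ →
      finalProb (rhoH h) lamUnif γ₁ = finalProb (rhoH h) lamUnif γ₂) ∧
    (∀ γ : Model p, sizeProb (p := p) (rhoH h) lamUnif (msize γ) ≠ 0 →
      finalProb (rhoH h) lamUnif γ / sizeProb (p := p) (rhoH h) lamUnif (msize γ)
        = ((p.choose (msize γ) : ℝ))⁻¹) ∧
    (∀ γ : Model p, msize γ < p →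
      finalProb (rhoH h) lamUnif γ
        = (h (msize γ) * ∏ r ∈ Finset.range (msize γ), (1 - h r)) /
            (p.choose (msize γ) : ℝ)) := by
  clear hh
  have P1 : ∀ γ₁ γ₂ : Model p, msize γ₁ = msize γ₂ →
      finalProb (rhoH h) lamUnif γ₁ = finalProb (rhoH h) lamUnif γ₂ := by
    intro γ₁ γ₂ hsz
    obtain ⟨σ, hσ⟩ := exists_perm hsz
    rw [← hσ, finalProb_perm]
  have P3 : ∀ γ : Model p, msize γ < p →
      finalProb (rhoH h) lamUnif γ
        = (h (msize γ) * ∏ r ∈ Finset.range (msize γ), (1 - h r)) /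
            (p.choose (msize γ) : ℝ) := by
    intro γ hlt
    rw [finalProb_eq h γ]
    have hmain := Mrec_main h γ hlt (msize γ) (mnull p)
      (fun j hj => absurd hj (by simp [mnull])) (by rw [msize_mnull]; omega)
    rw [msize_mnull, Nat.sub_zero] at hmain
    rw [hmain, prod_identity h hlt, mul_div_assoc]
  refine ⟨P1, ?_, P3⟩
  intro γ hne
  have key : sizeProb (p := p) (rhoH h) lamUnif (msize γ)
      = (p.choose (msize γ) : ℝ) * finalProb (rhoH h) lamUnif γ := by
    rw [sizeProb_eq]
    rw [Finset.sum_congr rfl (fun γ' hγ' =>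
      P1 γ' γ (by simpa using (Finset.mem_filter.mp hγ').2))]
    rw [Finset.sum_const, modelCard, nsmul_eq_mul]
  rw [key] at hne ⊢
  have hC : (p.choose (msize γ) : ℝ) ≠ 0 :=
    Nat.cast_ne_zero.mpr (Nat.choose_pos (msize_le γ)).ne'
  have hf : finalProb (rhoH h) lamUnif γ ≠ 0 := by
    intro h0
    rw [h0, mul_zero] at hne
    exact hne rfl
  field_simp
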